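/- Let S be a finite semigroup. A sequence s₁, ..., s_n ∈ S (n ≥ 1) is smooth (each s_i is infix-equivalent to the full product s₁·s₂· ⋯ ·s_n) if and only if every pair of consecutive elements s_i, s_{i+1} is smooth (i.e., s_i, s_{i+1}, and s_i·s_{i+1} are pairwise infix-equivalent). -/

import Mathlib

/-- `x` is an infix of `y` in a semigroup. -/
def SgIsInfix {S : Type*} [Semigroup S] (x y : S) : Prop :=
  y = x ∨ (∃ a, y = a * x) ∨ (∃ b, y = x * b) ∨ (∃ a b, y = a * x * b)

/-- Infix equivalence (J-equivalence) in a semigroup. -/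
def JEquiv {S : Type*} [Semigroup S] (x y : S) : Prop :=
  SgIsInfix x y ∧ SgIsInfix y x

namespace Stmt14Aux

instance {S : Type u_1} [Finite S] : Finite (WithOne S) :=
  Finite.of_equiv _ ((Equiv.optionEquivSumPUnit.{0, u_1} S).symm : S ⊕ PUnit.{1} ≃ WithOne S)

instance {M : Type*} [Finite M] : Finite Mᵐᵒᵖ :=
  Finite.of_equiv M MulOpposite.opEquiv

set_option linter.unusedSectionVars false

variable {S : Type*} [Semigroup S]

lemma infix_iff (x y : S) :
    SgIsInfix x y ↔ ∃ a b : WithOne S, (y : WithOne S) = a * x * b := by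
  constructor
  · rintro (rfl | ⟨a, rfl⟩ | ⟨b, rfl⟩ | ⟨a, b, rfl⟩)
    · exact ⟨1, 1, by simp⟩
    · exact ⟨a, 1, by simp⟩
    · exact ⟨1, b, by simp⟩
    · exact ⟨a, b, by simp [mul_assoc]⟩
  · rintro ⟨a, b, h⟩
    induction a using WithOne.recOneCoe with
    | one =>
      induction b using WithOne.recOneCoe with
      | one =>
        simp only [one_mul, mul_one] at h
        exact Or.inl (WithOne.coe_inj.mp h)
      | coe b =>
        simp only [one_mul, ← WithOne.coe_mul] at h
        exact Or.inr (Or.inr (Or.inl ⟨b, WithOne.coe_inj.mp h⟩))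
    | coe a =>
      induction b using WithOne.recOneCoe with
      | one =>
        simp only [mul_one, ← WithOne.coe_mul] at h
        exact Or.inr (Or.inl ⟨a, WithOne.coe_inj.mp h⟩)
      | coe b =>
        simp only [← WithOne.coe_mul] at h
        exact Or.inr (Or.inr (Or.inr ⟨a, b, WithOne.coe_inj.mp h⟩))

lemma infix_refl (x : S) : SgIsInfix x x := Or.inl rfl

lemma infix_mul_left (x a : S) : SgIsInfix x (a * x) := Or.inr (Or.inl ⟨a, rfl⟩)

lemma infix_mul_right (x b : S) : SgIsInfix x (x * b) := Or.inr (Or.inr (Or.inl ⟨b, rfl⟩))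

lemma infix_trans {x y z : S} (h1 : SgIsInfix x y) (h2 : SgIsInfix y z) : SgIsInfix x z := by
  rw [infix_iff] at h1 h2 ⊢
  obtain ⟨a, b, h1⟩ := h1
  obtain ⟨c, d, h2⟩ := h2
  exact ⟨c * a, b * d, by rw [h2, h1]; simp [mul_assoc]⟩

lemma jequiv_refl (x : S) : JEquiv x x := ⟨infix_refl x, infix_refl x⟩

lemma jequiv_trans {x y z : S} (h1 : JEquiv x y) (h2 : JEquiv y z) : JEquiv x z :=
  ⟨infix_trans h1.1 h2.1, infix_trans h2.2 h1.2⟩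

/-- idempotent power in a finite monoid -/
lemma exists_idem_pow {M : Type*} [Monoid M] [Finite M] (z : M) :
    ∃ n, 0 < n ∧ z ^ n * z ^ n = z ^ n := by
  obtain ⟨i, j, hne, hij⟩ := Finite.exists_ne_map_eq_of_infinite (fun n : ℕ => z ^ (n + 1))
  wlog hlt : i < j generalizing i j
  · exact this j i hne.symm hij.symm (by omega)
  set a := i + 1 with ha
  set k := j - i with hk
  have hk1 : 0 < k := by omega
  have hzk : z ^ (a + k) = z ^ a := by
    have : a + k = j + 1 := by omega
    rw [this]; exact hij.symm
  have step : ∀ m, a ≤ m → z ^ (m + k) = z ^ m := by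
    intro m hm
    obtain ⟨d, rfl⟩ := Nat.exists_eq_add_of_le hm
    calc z ^ (a + d + k) = z ^ d * z ^ (a + k) := by rw [← pow_add]; ring_nf
    _ = z ^ d * z ^ a := by rw [hzk]
    _ = z ^ (a + d) := by rw [← pow_add]; ring_nf
  have step2 : ∀ t m, a ≤ m → z ^ (m + t * k) = z ^ m := by
    intro t
    induction t with
    | zero => simp
    | succ t ih =>
      intro m hm
      have : m + (t + 1) * k = (m + t * k) + k := by ring
      rw [this, step _ (by nlinarith), ih m hm]
  refine ⟨a * k, by positivity, ?_⟩
  rw [← pow_add]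
  have : a * k + a * k = a * k + a * k := rfl
  calc z ^ (a * k + a * k) = z ^ (a * k) := step2 a (a * k) (by nlinarith)

/-- key finiteness lemma: if x = a * x * b then x = x * b ^ n for some n ≥ 1 -/
lemma mono_key {M : Type*} [Monoid M] [Finite M] {x a b : M} (h : x = a * x * b) :
    ∃ n, 0 < n ∧ x = x * b ^ n := by
  have key : ∀ n, x = a ^ n * x * b ^ n := by
    intro n
    induction n with
    | zero => simp
    | succ n ih =>
      calc x = a * x * b := h
        _ = a * (a ^ n * x * b ^ n) * b := by rw [← ih]
        _ = (a * a ^ n) * x * (b ^ n * b) := by simp [mul_assoc]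
        _ = a ^ (n + 1) * x * b ^ (n + 1) := by rw [← pow_succ, ← pow_succ']
  obtain ⟨n, hn, hidem⟩ := exists_idem_pow b
  refine ⟨n, hn, ?_⟩
  calc x = a ^ n * x * b ^ n := key n
    _ = a ^ n * x * (b ^ n * b ^ n) := by rw [hidem]
    _ = a ^ n * x * b ^ n * b ^ n := by simp [mul_assoc]
    _ = x * b ^ n := by rw [← key n]

lemma mono_key' {M : Type*} [Monoid M] [Finite M] {x a b : M} (h : x = a * x * b) :
    ∃ n, 0 < n ∧ x = a ^ n * x := by
  have h' : MulOpposite.op x = MulOpposite.op b * MulOpposite.op x * MulOpposite.op a := by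
    conv_lhs => rw [h]
    simp [mul_assoc]
  obtain ⟨n, hn, hx⟩ := mono_key h'
  refine ⟨n, hn, ?_⟩
  have : MulOpposite.op x = MulOpposite.op (a ^ n * x) := by
    rw [hx]; simp
  exact MulOpposite.op_injective this

variable [Finite S]

/-- "prefix" lemma: if x*y is an infix of x, then x*y is a prefix of x (in WithOne S). -/
lemma lemA {x y : S} (h : SgIsInfix (x * y) x) :
    ∃ c : WithOne S, (x : WithOne S) = ↑x * ↑y * c := by
  rw [infix_iff] at h
  obtain ⟨a, b, h⟩ := h
  have h' : (x : WithOne S) = a * ↑x * (↑y * b) := by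
    conv_lhs => rw [h]
    simp [mul_assoc]
  obtain ⟨n, hn, hx⟩ := mono_key h'
  obtain ⟨m, rfl⟩ := Nat.exists_eq_succ_of_ne_zero hn.ne'
  refine ⟨b * ((y : WithOne S) * b) ^ m, ?_⟩
  conv_lhs => rw [hx]
  rw [pow_succ']
  simp [mul_assoc]

lemma lemA' {x y : S} (h : SgIsInfix (x * y) y) :
    ∃ c : WithOne S, (y : WithOne S) = c * (↑x * ↑y) := by
  rw [infix_iff] at h
  obtain ⟨a, b, h⟩ := h
  have h' : (y : WithOne S) = (a * ↑x) * ↑y * b := by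
    conv_lhs => rw [h]
    simp [mul_assoc]
  obtain ⟨n, hn, hy⟩ := mono_key' h'
  obtain ⟨m, rfl⟩ := Nat.exists_eq_succ_of_ne_zero hn.ne'
  refine ⟨((a * (x : WithOne S)) ^ m) * a, ?_⟩
  conv_lhs => rw [hy, pow_succ]
  simp [mul_assoc]

lemma foldl_mul (x y : S) (l : List S) :
    l.foldl (· * ·) (x * y) = x * l.foldl (· * ·) y := by
  induction l generalizing y with
  | nil => rfl
  | cons a l ih =>
    simp only [List.foldl_cons]
    rw [mul_assoc]
    exact ih (y * a)

lemma infix_foldl (y : S) (l : List S) : SgIsInfix y (l.foldl (· * ·) y) := by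
  cases l with
  | nil => exact infix_refl y
  | cons a l =>
    rw [List.foldl_cons, foldl_mul]
    exact infix_mul_right _ _

lemma fwd (s : S) (l : List S)
    (H : ∀ x ∈ s :: l, JEquiv x (l.foldl (· * ·) s)) :
    List.Chain' (fun a b => JEquiv a (a * b) ∧ JEquiv b (a * b) ∧ JEquiv a b) (s :: l) := by
  induction l generalizing s with
  | nil => exact List.isChain_singleton _
  | cons t l ih =>
    simp only [List.foldl_cons] at H
    set P := l.foldl (· * ·) (s * t) with hP
    set Q := l.foldl (· * ·) t with hQ
    have hs : JEquiv s P := H s (by simp)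
    have ht : JEquiv t P := H t (by simp)
    have hPQmul : P = s * Q := foldl_mul s t l
    have hstP : SgIsInfix (s * t) P := infix_foldl (s * t) l
    have hQP : SgIsInfix Q P := hPQmul ▸ infix_mul_left Q s
    have hPQ : SgIsInfix P Q := infix_trans ht.2 (infix_foldl t l)
    simp only [List.Chain', List.isChain_cons_cons]
    refine ⟨⟨⟨infix_mul_right s t, infix_trans hstP hs.2⟩,
      ⟨infix_mul_left t s, infix_trans hstP ht.2⟩,
      ⟨infix_trans hs.1 ht.2, infix_trans ht.1 hs.2⟩⟩, ?_⟩
    refine ih t ?_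
    intro x hx
    have hxP : JEquiv x P := H x (by simp at hx ⊢; tauto)
    exact ⟨infix_trans hxP.1 hPQ, infix_trans hQP hxP.2⟩

lemma rev (s : S) (l : List S)
    (H : List.Chain' (fun a b => JEquiv a (a * b) ∧ JEquiv b (a * b) ∧ JEquiv a b) (s :: l)) :
    ∀ x ∈ s :: l, JEquiv x (l.foldl (· * ·) s) := by
  induction l generalizing s with
  | nil =>
    intro x hx
    simp only [List.mem_singleton] at hx
    subst hx
    exact jequiv_refl x
  | cons t l ih =>
    simp only [List.Chain', List.isChain_cons_cons] at H
    obtain ⟨⟨hsst, htst, hst⟩, hc⟩ := H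
    have hc' : List.Chain' (fun a b => JEquiv a (a * b) ∧ JEquiv b (a * b) ∧ JEquiv a b)
        ((s * t) :: l) := by
      cases l with
      | nil => exact List.isChain_singleton _
      | cons u l2 =>
        simp only [List.Chain', List.isChain_cons_cons] at hc ⊢
        obtain ⟨⟨httu, hutu, htu⟩, hc2⟩ := hc
        refine ⟨?_, hc2⟩
        obtain ⟨c, hc1⟩ := lemA (x := t) (y := u) httu.2
        obtain ⟨d, hd1⟩ := lemA' (x := s) (y := t) htst.2
        obtain ⟨f, hf1⟩ := lemA' (x := t) (y := u) hutu.2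
        refine ⟨⟨infix_mul_right _ _, ?_⟩, ⟨infix_mul_left _ _, ?_⟩, ⟨?_, ?_⟩⟩
        · -- SgIsInfix (s*t*u) (s*t)
          rw [infix_iff]
          refine ⟨1, c, ?_⟩
          rw [one_mul]
          push_cast
          conv_lhs => rw [hc1]
          simp [mul_assoc]
        · -- SgIsInfix (s*t*u) u
          rw [infix_iff]
          refine ⟨f * d, 1, ?_⟩
          conv_lhs => rw [hf1, hd1]
          push_cast
          simp [mul_assoc]
        · -- SgIsInfix (s*t) u
          rw [infix_iff]
          refine ⟨f * d, (u : WithOne S), ?_⟩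
          conv_lhs => rw [hf1, hd1]
          push_cast
          simp [mul_assoc]
        · -- SgIsInfix u (s*t)
          rw [infix_iff]
          refine ⟨(s : WithOne S) * t, c, ?_⟩
          push_cast
          conv_lhs => rw [hc1]
          simp [mul_assoc]
    have hIH := ih (s * t) hc'
    have hstP : JEquiv (s * t) (l.foldl (· * ·) (s * t)) := hIH (s * t) (by simp)
    intro x hx
    simp only [List.foldl_cons]
    simp only [List.mem_cons] at hx
    rcases hx with rfl | rfl | hx
    · exact jequiv_trans hsst hstP
    · exact jequiv_trans htst hstP
    · exact hIH x (by simp [hx])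

end Stmt14Aux

theorem stmt_14 {S : Type*} [Semigroup S] [Finite S] (s : S) (l : List S) :
    (∀ x ∈ s :: l, JEquiv x (l.foldl (· * ·) s)) ↔
      List.Chain' (fun a b => JEquiv a (a * b) ∧ JEquiv b (a * b) ∧ JEquiv a b) (s :: l) := by
  exact ⟨Stmt14Aux.fwd s l, Stmt14Aux.rev s l⟩
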